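/- Let $R$ be a commutative ring of characteristic $p$ (a prime) and let $x \in R$ satisfy $x^p = 0$. Then the truncated exponential $E(x) = \sum_{i=0}^{p-1} x^i/i!$ satisfies $E(x)^p = 1$, i.e., $E(x)$ is $p$-unipotent. -/

import Mathlib

/-- The truncated exponential `E(x) = ∑_{i=0}^{p-1} x^i / i!` in a commutative ring of
characteristic `p`, where the inverse factorials are taken in `ℤ/p` and mapped into `R`. -/
noncomputable def truncExp (p : ℕ) {R : Type*} [CommRing R] [CharP R p] (x : R) : R :=
  ∑ i ∈ Finset.range p, ZMod.castHom (dvd_refl p) R ((i.factorial : ZMod p)⁻¹) * x ^ i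

theorem truncExp_pow_char {p : ℕ} (hp : p.Prime) {R : Type*} [CommRing R] [CharP R p]
    (x : R) (hx : x ^ p = 0) :
    (truncExp p x) ^ p = 1 := by
  haveI : Fact p.Prime := ⟨hp⟩
  rw [truncExp, sum_pow_char]
  rw [Finset.sum_eq_single_of_mem 0 (Finset.mem_range.mpr hp.pos)]
  · simp
  · intro i _ hi
    rw [mul_pow, ← pow_mul, mul_comm i p, pow_mul, hx, zero_pow hi, mul_zero]
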